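/- Let I be a partial order satisfying: (i) any two elements have a greatest lower bound, (ii) any two elements with an upper bound have a least upper bound, (iii) of any three elements, two have an upper bound, and (iv) the distributive laws hold whenever both sides exist. Suppose I has no maximal element; adjoin a new top element ℓ to form J = I ∪ {ℓ}. Then J is a distributive lattice if and only if I additionally satisfies: (v) if i and j have no upper bound and j' is arbitrary, then either neither i, j' nor i, j ∧ j' have an upper bound, or i ∨ j' = i ∨ (j ∧ j'), and (vi) if j, j' have no upper bound, then (i ∧ j) ∨ (i ∧ j') = i for any i. -/
import Mathlib


/-- A partial order with all binary meets satisfying axioms (i)-(iv) of a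
distributive almost-lattice: joins exist for pairs with an upper bound,
of any three elements two have an upper bound, and the distributive laws
hold whenever both sides exist. -/
structure AlmostLattice (I : Type*) [SemilatticeInf I] : Prop where
  join_exists : ∀ i j : I, (∃ k, i ≤ k ∧ j ≤ k) → ∃ k, IsLUB {i, j} k
  two_of_three : ∀ i₀ i₁ i₂ : I,
    (∃ k, i₀ ≤ k ∧ i₁ ≤ k) ∨ (∃ k, i₀ ≤ k ∧ i₂ ≤ k) ∨ (∃ k, i₁ ≤ k ∧ i₂ ≤ k)
  distrib_join : ∀ i j j' a b c : I, IsLUB {i, j} a → IsLUB {i, j'} b →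
    IsLUB {i, j ⊓ j'} c → c = a ⊓ b
  distrib_meet : ∀ i j j' a b : I, IsLUB {j, j'} a →
    IsLUB {i ⊓ j, i ⊓ j'} b → b = i ⊓ a

/-- Property (v): if `i` and `j` have no upper bound and `j'` is arbitrary, then either
neither `i, j'` nor `i, j ⊓ j'` have an upper bound, or `i ∨ j' = i ∨ (j ⊓ j')`. -/
def PropFive (I : Type*) [SemilatticeInf I] : Prop :=
  ∀ i j j' : I, ¬ (∃ k, i ≤ k ∧ j ≤ k) →
    ((¬ ∃ k, i ≤ k ∧ j' ≤ k) ∧ ¬ ∃ k, i ≤ k ∧ j ⊓ j' ≤ k) ∨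
    (∃ k, IsLUB {i, j'} k ∧ IsLUB {i, j ⊓ j'} k)

/-- Property (vi): if `j, j'` have no upper bound, then `(i ⊓ j) ∨ (i ⊓ j') = i` for any `i`. -/
def PropSix (I : Type*) [SemilatticeInf I] : Prop :=
  ∀ i j j' : I, ¬ (∃ k, j ≤ k ∧ j' ≤ k) → IsLUB {i ⊓ j, i ⊓ j'} i

section Aux

variable {I : Type*} [SemilatticeInf I]

lemma isLUB_pair_iff {α : Type*} [Preorder α] {a b c : α} :
    IsLUB {a, b} c ↔ a ≤ c ∧ b ≤ c ∧ ∀ d, a ≤ d → b ≤ d → c ≤ d := by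
  constructor
  · rintro ⟨h1, h2⟩
    exact ⟨h1 (by simp), h1 (by simp),
      fun d ha hb => h2 (by rintro x (rfl | rfl) <;> assumption)⟩
  · rintro ⟨h1, h2, h3⟩
    exact ⟨by rintro x (rfl | rfl) <;> assumption,
      fun d hd => h3 d (hd (by simp)) (hd (by simp))⟩

lemma coe_isLUB_pair {i j k : I} (h : IsLUB {i, j} k) :
    IsLUB {(i : WithTop I), (j : WithTop I)} (k : WithTop I) := by
  rw [isLUB_pair_iff] at h ⊢
  obtain ⟨h1, h2, h3⟩ := h
  refine ⟨WithTop.coe_le_coe.2 h1, WithTop.coe_le_coe.2 h2, fun d hi hj => ?_⟩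
  cases d with
  | top => exact le_top
  | coe m => exact WithTop.coe_le_coe.2 (h3 m (WithTop.coe_le_coe.1 hi) (WithTop.coe_le_coe.1 hj))

lemma isLUB_pair_of_coe {i j k : I}
    (h : IsLUB {(i : WithTop I), (j : WithTop I)} (k : WithTop I)) : IsLUB {i, j} k := by
  rw [isLUB_pair_iff] at h ⊢
  obtain ⟨h1, h2, h3⟩ := h
  exact ⟨WithTop.coe_le_coe.1 h1, WithTop.coe_le_coe.1 h2,
    fun d hi hj => WithTop.coe_le_coe.1
      (h3 d (WithTop.coe_le_coe.2 hi) (WithTop.coe_le_coe.2 hj))⟩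

open Classical in
/-- The candidate join on `WithTop I`. -/
noncomputable def jsupAux (hal : AlmostLattice I) : WithTop I → WithTop I → WithTop I :=
  fun a b =>
    match a, b with
    | ⊤, _ => ⊤
    | (_ : I), ⊤ => ⊤
    | (i : I), (j : I) =>
        if h : ∃ k, i ≤ k ∧ j ≤ k then ((hal.join_exists i j h).choose : WithTop I) else ⊤

variable (hal : AlmostLattice I)

lemma jsupAux_top_left (b : WithTop I) : jsupAux hal ⊤ b = ⊤ := rfl

lemma jsupAux_top_right (i : I) : jsupAux hal (i : WithTop I) ⊤ = ⊤ := rfl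

lemma jsupAux_pos {i j : I} (h : ∃ k, i ≤ k ∧ j ≤ k) :
    jsupAux hal (i : WithTop I) (j : WithTop I) = ((hal.join_exists i j h).choose : WithTop I) := by
  simp [jsupAux, dif_pos h]

lemma jsupAux_neg {i j : I} (h : ¬ ∃ k, i ≤ k ∧ j ≤ k) :
    jsupAux hal (i : WithTop I) (j : WithTop I) = ⊤ := by
  simp [jsupAux, dif_neg h]

lemma jsupAux_isLUB (a b : WithTop I) : IsLUB {a, b} (jsupAux hal a b) := by
  cases a with
  | top =>
    rw [jsupAux_top_left]
    exact isLUB_pair_iff.2 ⟨le_rfl, le_top, fun d hd _ => hd⟩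
  | coe i =>
    cases b with
    | top =>
      rw [jsupAux_top_right]
      exact isLUB_pair_iff.2 ⟨le_top, le_rfl, fun d _ hd => hd⟩
    | coe j =>
      by_cases h : ∃ k, i ≤ k ∧ j ≤ k
      · rw [jsupAux_pos hal h]
        exact coe_isLUB_pair (hal.join_exists i j h).choose_spec
      · rw [jsupAux_neg hal h]
        refine isLUB_pair_iff.2 ⟨le_top, le_top, fun d hi hj => ?_⟩
        cases d with
        | top => exact le_rfl
        | coe m =>
          exact absurd ⟨m, WithTop.coe_le_coe.1 hi, WithTop.coe_le_coe.1 hj⟩ h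

lemma jsupAux_eq_coe {i j k : I} (h : IsLUB {i, j} k) :
    jsupAux hal (i : WithTop I) (j : WithTop I) = (k : WithTop I) :=
  (jsupAux_isLUB hal _ _).unique (coe_isLUB_pair h)

lemma jsupAux_eq_left {a b : WithTop I} (h : b ≤ a) : jsupAux hal a b = a :=
  (jsupAux_isLUB hal a b).unique (isLUB_pair_iff.2 ⟨le_rfl, h, fun _ hd _ => hd⟩)

lemma jsupAux_eq_right {a b : WithTop I} (h : a ≤ b) : jsupAux hal a b = b :=
  (jsupAux_isLUB hal a b).unique (isLUB_pair_iff.2 ⟨h, le_rfl, fun _ _ hd => hd⟩)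

lemma jsupAux_meet_distrib (h6 : PropSix I) (a b c : WithTop I) :
    a ⊓ jsupAux hal b c = jsupAux hal (a ⊓ b) (a ⊓ c) := by
  cases a with
  | top => simp [top_inf_eq]
  | coe i =>
    cases b with
    | top =>
      have h1 : jsupAux hal ((i : WithTop I)) ((i : WithTop I) ⊓ c) = (i : WithTop I) :=
        jsupAux_eq_left hal inf_le_left
      simp [jsupAux_top_left, inf_top_eq, h1]
    | coe j =>
      cases c with
      | top =>
        have h1 : jsupAux hal ((i : WithTop I) ⊓ (j : WithTop I)) (i : WithTop I)
            = (i : WithTop I) := jsupAux_eq_right hal inf_le_left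
        simp [jsupAux_top_right, inf_top_eq, h1]
      | coe k =>
        by_cases h : ∃ m, j ≤ m ∧ k ≤ m
        · obtain ⟨s, hs⟩ := hal.join_exists j k h
          obtain ⟨hs1, hs2, hs3⟩ := isLUB_pair_iff.1 hs
          have hub : ∃ m, i ⊓ j ≤ m ∧ i ⊓ k ≤ m :=
            ⟨s, le_trans inf_le_right hs1, le_trans inf_le_right hs2⟩
          obtain ⟨t, ht⟩ := hal.join_exists _ _ hub
          have htv : t = i ⊓ s := hal.distrib_meet i j k s t hs ht
          rw [jsupAux_eq_coe hal hs]
          simp only [← WithTop.coe_inf]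
          rw [jsupAux_eq_coe hal ht, htv]
        · rw [jsupAux_neg hal h, inf_top_eq]
          have h1 := h6 i j k h
          simp only [← WithTop.coe_inf]
          rw [jsupAux_eq_coe hal h1]

lemma jsupAux_join_distrib (h5 : PropFive I) (a b c : WithTop I) :
    jsupAux hal a (b ⊓ c) = jsupAux hal a b ⊓ jsupAux hal a c := by
  cases a with
  | top => simp [jsupAux_top_left, top_inf_eq]
  | coe i =>
    cases b with
    | top => simp [jsupAux_top_right, top_inf_eq]
    | coe j =>
      cases c with
      | top => simp [jsupAux_top_right, inf_top_eq]
      | coe k =>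
        by_cases hb : ∃ m, i ≤ m ∧ j ≤ m
        · by_cases hc : ∃ m, i ≤ m ∧ k ≤ m
          · obtain ⟨p, hp⟩ := hal.join_exists i j hb
            obtain ⟨q, hq⟩ := hal.join_exists i k hc
            obtain ⟨hp1, hp2, hp3⟩ := isLUB_pair_iff.1 hp
            have hub : ∃ m, i ≤ m ∧ j ⊓ k ≤ m := ⟨p, hp1, le_trans inf_le_left hp2⟩
            obtain ⟨r, hr⟩ := hal.join_exists _ _ hub
            have hrv : r = p ⊓ q := hal.distrib_join i j k p q r hp hq hr
            rw [jsupAux_eq_coe hal hp, jsupAux_eq_coe hal hq]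
            simp only [← WithTop.coe_inf]
            rw [jsupAux_eq_coe hal hr, hrv]
          · rcases h5 i k j hc with ⟨h1, _⟩ | ⟨m, hm1, hm2⟩
            · exact absurd hb h1
            · have hcomm : j ⊓ k = k ⊓ j := inf_comm j k
              rw [jsupAux_neg hal hc, inf_top_eq, ← WithTop.coe_inf, hcomm,
                jsupAux_eq_coe hal hm2, jsupAux_eq_coe hal hm1]
        · rcases h5 i j k hb with ⟨h1, h2⟩ | ⟨m, hm1, hm2⟩
          · rw [jsupAux_neg hal hb, top_inf_eq, jsupAux_neg hal h1, ← WithTop.coe_inf,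
              jsupAux_neg hal h2]
          · rw [jsupAux_neg hal hb, top_inf_eq, jsupAux_eq_coe hal hm1, ← WithTop.coe_inf,
              jsupAux_eq_coe hal hm2]

end Aux

/-- If `I` satisfies (i)-(iv) and has no maximal element, then `J = I ∪ {ℓ}` (modelled
as `WithTop I`) is a distributive lattice iff `I` satisfies (v) and (vi). -/
theorem stmt0 {I : Type*} [SemilatticeInf I] (hal : AlmostLattice I)
    (hnomax : ∀ i : I, ∃ j, i < j) :
    (PropFive I ∧ PropSix I) ↔
      ∃ jsup : WithTop I → WithTop I → WithTop I,
        (∀ a b : WithTop I, IsLUB {a, b} (jsup a b)) ∧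
        (∀ a b c : WithTop I, a ⊓ jsup b c = jsup (a ⊓ b) (a ⊓ c)) ∧
        (∀ a b c : WithTop I, jsup a (b ⊓ c) = jsup a b ⊓ jsup a c) := by
  constructor
  · rintro ⟨h5, h6⟩
    exact ⟨jsupAux hal, jsupAux_isLUB hal, jsupAux_meet_distrib hal h6,
      jsupAux_join_distrib hal h5⟩
  · rintro ⟨jsup, hlub, hmd, hjd⟩
    have hne : ∀ i j : I, ¬ (∃ k, i ≤ k ∧ j ≤ k) → jsup (i : WithTop I) (j : WithTop I) = ⊤ := by
      intro i j h
      cases hj : jsup (i : WithTop I) (j : WithTop I) with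
      | top => rfl
      | coe m =>
        have hl := hlub (i : WithTop I) (j : WithTop I)
        rw [hj] at hl
        obtain ⟨h1, h2, _⟩ := isLUB_pair_iff.1 hl
        exact absurd ⟨m, WithTop.coe_le_coe.1 h1, WithTop.coe_le_coe.1 h2⟩ h
    have hnoub : ∀ i j : I, jsup (i : WithTop I) (j : WithTop I) = ⊤ →
        ¬ ∃ k, i ≤ k ∧ j ≤ k := by
      rintro i j htop ⟨k, h1, h2⟩
      have hk : (k : WithTop I) ∈ upperBounds {(i : WithTop I), (j : WithTop I)} := by
        rintro x (rfl | rfl) <;> exact WithTop.coe_le_coe.2 ‹_›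
      have hle := (hlub (i : WithTop I) (j : WithTop I)).2 hk
      rw [htop] at hle
      exact WithTop.not_top_le_coe k hle
    have hcoe : ∀ i j m : I, jsup (i : WithTop I) (j : WithTop I) = (m : WithTop I) →
        IsLUB {i, j} m := fun i j m h => isLUB_pair_of_coe (h ▸ hlub _ _)
    constructor
    · intro i j j' hij
      have key : jsup (i : WithTop I) ((j ⊓ j' : I) : WithTop I)
          = jsup (i : WithTop I) (j' : WithTop I) := by
        rw [WithTop.coe_inf, hjd, hne i j hij, top_inf_eq]
      cases hj' : jsup (i : WithTop I) (j' : WithTop I) with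
      | top =>
        rw [hj'] at key
        exact Or.inl ⟨hnoub i j' hj', hnoub i (j ⊓ j') key⟩
      | coe m =>
        rw [hj'] at key
        exact Or.inr ⟨m, hcoe i j' m hj', hcoe i (j ⊓ j') m key⟩
    · intro i j j' h
      have key : jsup (((i ⊓ j : I)) : WithTop I) (((i ⊓ j' : I)) : WithTop I)
          = (i : WithTop I) := by
        rw [WithTop.coe_inf, WithTop.coe_inf, ← hmd, hne j j' h, inf_top_eq]
      exact isLUB_pair_of_coe (key ▸ hlub _ _)
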